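/- Let f(z) = (λ/2)·exp(−λ|z|) be the density of the centered double exponential (Laplace) distribution with parameter λ > 0, and fix δ₀ > 0. Then there exist constants C > 0 and θ₀ > 0 (depending only on λ and δ₀) such that for all θ with |θ| ≤ θ₀ and all δ ∈ (0, δ₀], | ∫_ℝ { (f(z+θ)/f(z))^{1+δ} − 1 } f(z) dz − (1/2)·δ(1+δ)·θ²·λ² | ≤ C·δ(1+δ)·|θ|³. -/

import Mathlib

open MeasureTheory Real Set Filter Topology

lemma myIntegral_exp_mul (c a b : ℝ) (hc : c ≠ 0) :
    ∫ x in a..b, Real.exp (c * x) = (Real.exp (c * b) - Real.exp (c * a)) / c := by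
  rw [intervalIntegral.integral_comp_mul_left Real.exp hc, integral_exp, smul_eq_mul]
  field_simp

lemma myIntegrableOn_exp_mul_Iic {c : ℝ} (hc : 0 < c) (b : ℝ) :
    IntegrableOn (fun x : ℝ => Real.exp (c * x)) (Iic b) := by
  refine integrableOn_Iic_of_intervalIntegral_norm_bounded (Real.exp (c * b) / c) b
    (fun y => ?_) tendsto_id (Eventually.of_forall fun y => ?_)
  · exact (Real.continuous_exp.comp (continuous_const.mul continuous_id)).integrableOn_Ioc
  · simp only [Real.norm_eq_abs, abs_of_pos (Real.exp_pos _), id]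
    rw [myIntegral_exp_mul c y b hc.ne']
    have := Real.exp_pos (c * y)
    have := Real.exp_pos (c * b)
    rw [div_le_div_iff_of_pos_right hc] -- maybe wrong name
    linarith

lemma myIntegral_exp_mul_Iic {c : ℝ} (hc : 0 < c) (b : ℝ) :
    ∫ x in Iic b, Real.exp (c * x) = Real.exp (c * b) / c := by
  refine tendsto_nhds_unique
    (intervalIntegral_tendsto_integral_Iic b (myIntegrableOn_exp_mul_Iic hc b) tendsto_id) ?_
  have h : ∀ y : ℝ, ∫ x in y..b, Real.exp (c * x) = (Real.exp (c * b) - Real.exp (c * y)) / c :=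
    fun y => myIntegral_exp_mul c y b hc.ne'
  simp only [id, h]
  have h2 : Tendsto (fun y : ℝ => Real.exp (c * y)) atBot (𝓝 0) :=
    Real.tendsto_exp_atBot.comp (Tendsto.const_mul_atBot hc tendsto_id)
  have := ((tendsto_const_nhds (x := Real.exp (c * b))).sub h2).div_const c
  simpa using this

lemma myIntegrableOn_exp_neg_mul_Ioi {c : ℝ} (hc : 0 < c) (b : ℝ) :
    IntegrableOn (fun x : ℝ => Real.exp (-(c * x))) (Ioi b) := by
  simpa [neg_mul] using exp_neg_integrableOn_Ioi b hc

lemma myIntegral_exp_neg_mul_Ioi {c : ℝ} (hc : 0 < c) (b : ℝ) :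
    ∫ x in Ioi b, Real.exp (-(c * x)) = Real.exp (-(c * b)) / c := by
  have h : ∀ x : ℝ, Real.exp (-(c * x)) = (fun y : ℝ => Real.exp (c * y)) (-x) := by
    intro x; simp [mul_neg]
  have h2 := integral_comp_neg_Ioi b (fun y : ℝ => Real.exp (c * y))
  simp only [h]
  rw [h2, myIntegral_exp_mul_Iic hc, mul_neg]

lemma myIntegral_comp_neg (f : ℝ → ℝ) : ∫ x : ℝ, f (-x) = ∫ x : ℝ, f x := by
  have A : MeasurableEmbedding fun x : ℝ => -x :=
    (Homeomorph.neg ℝ).isClosedEmbedding.measurableEmbedding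
  have h := A.integral_map (μ := (volume : Measure ℝ)) f
  rw [show (fun x : ℝ => -x) = (Neg.neg : ℝ → ℝ) from rfl, Measure.map_neg_eq_self] at h
  exact h.symm



lemma laplace_int_nonneg (lam δ θ : ℝ) (hlam : 0 < lam) (hδ : 0 < δ) (hθ : 0 ≤ θ) :
    ∫ z : ℝ, (Real.exp (-(lam * (1 + δ) * (|z + θ| - |z|))) - 1) * (lam / 2 * Real.exp (-(lam * |z|)))
      = ((1 + δ) * Real.exp (lam * δ * θ) + δ * Real.exp (-(lam * (1 + δ) * θ))) / (1 + 2 * δ) - 1 := by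
  have hδ1 : (0:ℝ) < 1 + δ := by linarith
  have h2δ : (0:ℝ) < 1 + 2 * δ := by linarith
  set a : ℝ := lam * (1 + δ) with ha
  have ha0 : 0 < a := mul_pos hlam hδ1
  have hk : lam - 2 * a ≠ 0 := by rw [ha]; nlinarith
  set g : ℝ → ℝ := fun z =>
    (Real.exp (-(a * (|z + θ| - |z|))) - 1) * (lam / 2 * Real.exp (-(lam * |z|))) with hg
  have hgc : Continuous g := by
    rw [hg]; fun_prop
  -- region descriptions
  have e1 : EqOn g (fun z => (Real.exp (a * θ) - 1) * (lam / 2) * Real.exp (lam * z)) (Iic (-θ)) := by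
    intro z hz
    simp only [mem_Iic] at hz
    have h1 : z + θ ≤ 0 := by linarith
    have h2 : z ≤ 0 := by linarith
    simp only [hg, abs_of_nonpos h1, abs_of_nonpos h2]
    rw [show -(a * (-(z + θ) - -z)) = a * θ by ring, show -(lam * -z) = lam * z by ring]
    ring
  have e2 : EqOn g (fun z => lam / 2 *
      (Real.exp (-(a * θ)) * Real.exp ((lam - 2 * a) * z) - Real.exp (lam * z))) (Ioc (-θ) 0) := by
    intro z hz
    simp only [mem_Ioc] at hz
    have h1 : 0 ≤ z + θ := by linarith [hz.1]
    have h2 : z ≤ 0 := hz.2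
    simp only [hg, abs_of_nonneg h1, abs_of_nonpos h2]
    rw [show -(lam * -z) = lam * z by ring]
    have : Real.exp (-(a * (z + θ - -z))) * Real.exp (lam * z)
        = Real.exp (-(a * θ)) * Real.exp ((lam - 2 * a) * z) := by
      rw [← Real.exp_add, ← Real.exp_add]; congr 1; ring
    calc (Real.exp (-(a * (z + θ - -z))) - 1) * (lam / 2 * Real.exp (lam * z))
        = lam / 2 * (Real.exp (-(a * (z + θ - -z))) * Real.exp (lam * z) - Real.exp (lam * z)) := by
          ring
      _ = _ := by rw [this]
  have e3 : EqOn g (fun z => (Real.exp (-(a * θ)) - 1) * (lam / 2) * Real.exp (-(lam * z))) (Ioi 0) := by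
    intro z hz
    simp only [mem_Ioi] at hz
    have h1 : 0 ≤ z + θ := by linarith
    have h2 : 0 ≤ z := le_of_lt hz
    simp only [hg, abs_of_nonneg h1, abs_of_nonneg h2]
    rw [show z + θ - z = θ by ring]
    ring
  -- integrability
  have int1 : IntegrableOn g (Iic (-θ)) := by
    refine IntegrableOn.congr_fun ?_ e1.symm measurableSet_Iic
    exact (myIntegrableOn_exp_mul_Iic hlam (-θ)).const_mul _
  have int2 : IntegrableOn g (Ioc (-θ) 0) := hgc.integrableOn_Ioc
  have int3 : IntegrableOn g (Ioi 0) := by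
    refine IntegrableOn.congr_fun ?_ e3.symm measurableSet_Ioi
    exact (myIntegrableOn_exp_neg_mul_Ioi hlam 0).const_mul _
  have hsplit : Ioc (-θ) 0 ∪ Ioi (0:ℝ) = Ioi (-θ) := Ioc_union_Ioi_eq_Ioi (by linarith)
  have intIoi : IntegrableOn g (Ioi (-θ)) := by rw [← hsplit]; exact int2.union int3
  have key : ∫ z : ℝ, g z
      = (∫ z in Iic (-θ), g z) + ((∫ z in Ioc (-θ) 0, g z) + ∫ z in Ioi 0, g z) := by
    rw [← setIntegral_union Ioc_disjoint_Ioi_same measurableSet_Ioi int2 int3, hsplit,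
      intervalIntegral.integral_Iic_add_Ioi int1 intIoi]
  -- values
  have v1 : ∫ z in Iic (-θ), g z = (Real.exp (a * θ) - 1) * Real.exp (-(lam * θ)) / 2 := by
    rw [setIntegral_congr_fun measurableSet_Iic e1]
    simp_rw [mul_assoc]
    rw [integral_const_mul, integral_const_mul, myIntegral_exp_mul_Iic hlam]
    rw [show lam * (-θ) = -(lam * θ) by ring]
    field_simp
  have v3 : ∫ z in Ioi 0, g z = (Real.exp (-(a * θ)) - 1) / 2 := by
    rw [setIntegral_congr_fun measurableSet_Ioi e3]
    simp_rw [mul_assoc]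
    rw [integral_const_mul, integral_const_mul, myIntegral_exp_neg_mul_Ioi hlam]
    simp only [mul_zero, neg_zero, mul_neg, Real.exp_zero]
    field_simp
  have v2 : ∫ z in Ioc (-θ) 0, g z
      = lam / 2 * (Real.exp (-(a * θ)) *
          ((1 - Real.exp ((lam - 2 * a) * (-θ))) / (lam - 2 * a))
          - (1 - Real.exp (lam * (-θ))) / lam) := by
    rw [setIntegral_congr_fun measurableSet_Ioc e2,
      ← intervalIntegral.integral_of_le (by linarith : -θ ≤ (0:ℝ))]
    rw [intervalIntegral.integral_const_mul]
    have i1 : IntervalIntegrable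
        (fun x : ℝ => Real.exp (-(a * θ)) * Real.exp ((lam - 2 * a) * x)) volume (-θ) 0 :=
      Continuous.intervalIntegrable (by fun_prop) _ _
    have i2 : IntervalIntegrable (fun x : ℝ => Real.exp (lam * x)) volume (-θ) 0 :=
      Continuous.intervalIntegrable (by fun_prop) _ _
    rw [intervalIntegral.integral_sub i1 i2, intervalIntegral.integral_const_mul,
      myIntegral_exp_mul _ _ _ hk, myIntegral_exp_mul _ _ _ hlam.ne']
    simp only [mul_zero, neg_zero, mul_neg, Real.exp_zero]
  rw [key, v1, v2, v3]
  have hu : Real.exp (a * θ) = Real.exp (lam * θ) * Real.exp (lam * δ * θ) := by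
    rw [← Real.exp_add]; congr 1; rw [ha]; ring
  have hna : Real.exp (-(a * θ)) = (Real.exp (lam * θ) * Real.exp (lam * δ * θ))⁻¹ := by
    rw [Real.exp_neg, hu]
  have hnl : Real.exp (-(lam * θ)) = (Real.exp (lam * θ))⁻¹ := Real.exp_neg _
  have hk2 : Real.exp ((lam - 2 * a) * (-θ))
      = Real.exp (lam * θ) * (Real.exp (lam * δ * θ) * Real.exp (lam * δ * θ)) := by
    rw [← Real.exp_add, ← Real.exp_add]; congr 1; rw [ha]; ring
  have hlne : Real.exp (lam * (-θ)) = (Real.exp (lam * θ))⁻¹ := by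
    rw [← Real.exp_neg]; congr 1; ring
  have hka : lam - 2 * a = -(lam * (1 + 2 * δ)) := by rw [ha]; ring
  rw [hu, hna, hnl, hk2, hlne, hka]
  have hu0 : Real.exp (lam * θ) ≠ 0 := (Real.exp_pos _).ne'
  have hv0 : Real.exp (lam * δ * θ) ≠ 0 := (Real.exp_pos _).ne'
  have hd0 : (1 + 2 * δ) ≠ 0 := h2δ.ne'
  field_simp
  ring


lemma cubic_exp_bound {x : ℝ} (hx : |x| ≤ 1) :
    |Real.exp x - (1 + x + x ^ 2 / 2)| ≤ |x| ^ 3 * (2 / 9) := by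
  have h := Real.exp_bound hx (n := 3) (by norm_num)
  have h2 : ∑ m ∈ Finset.range 3, x ^ m / m.factorial = 1 + x + x ^ 2 / 2 := by
    simp [Finset.sum_range_succ, Nat.factorial]
  rw [h2] at h
  convert h using 2
  norm_num [Nat.factorial]

lemma remainder_bound (lam δ₀ : ℝ) (hlam : 0 < lam) (hδ₀ : 0 < δ₀) :
    ∃ C > (0:ℝ), ∃ θ₀ > (0:ℝ), ∀ t : ℝ, 0 ≤ t → t ≤ θ₀ → ∀ δ : ℝ, 0 < δ → δ ≤ δ₀ →
      |((1 + δ) * Real.exp (lam * δ * t) + δ * Real.exp (-(lam * (1 + δ) * t))) / (1 + 2 * δ) - 1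
        - 1 / 2 * δ * (1 + δ) * t ^ 2 * lam ^ 2| ≤ C * δ * (1 + δ) * t ^ 3 := by
  refine ⟨lam ^ 3 * (δ₀ ^ 2 + (1 + δ₀) ^ 2), by positivity,
    1 / (lam * (1 + δ₀)), by positivity, fun t ht htθ δ hδ hδδ => ?_⟩
  have hδ1 : (0:ℝ) < 1 + δ := by linarith
  have h2δ : (0:ℝ) < 1 + 2 * δ := by linarith
  set x : ℝ := lam * δ * t with hxd
  set y : ℝ := lam * (1 + δ) * t with hyd
  have hx0 : 0 ≤ x := by positivity
  have hy0 : 0 ≤ y := by positivity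
  have hA : 0 < lam * (1 + δ₀) := by positivity
  have ht1 : t * (lam * (1 + δ₀)) ≤ 1 := by
    rw [← le_div_iff₀ hA]; exact htθ
  have hy1 : y ≤ 1 := by rw [hyd]; nlinarith
  have hx1 : x ≤ 1 := by rw [hxd]; nlinarith
  have hR1 := cubic_exp_bound (x := x) (by rwa [abs_of_nonneg hx0])
  have hR2 := cubic_exp_bound (x := -y) (by rwa [abs_neg, abs_of_nonneg hy0])
  rw [abs_of_nonneg hx0] at hR1
  rw [abs_neg, abs_of_nonneg hy0] at hR2
  have hkey : ((1 + δ) * Real.exp x + δ * Real.exp (-y)) / (1 + 2 * δ) - 1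
        - 1 / 2 * δ * (1 + δ) * t ^ 2 * lam ^ 2
      = ((1 + δ) * (Real.exp x - (1 + x + x ^ 2 / 2))
          + δ * (Real.exp (-y) - (1 + (-y) + (-y) ^ 2 / 2))) / (1 + 2 * δ) := by
    rw [hxd, hyd]
    field_simp
    ring
  rw [hkey]
  have habs : |((1 + δ) * (Real.exp x - (1 + x + x ^ 2 / 2))
      + δ * (Real.exp (-y) - (1 + (-y) + (-y) ^ 2 / 2))) / (1 + 2 * δ)|
      ≤ (1 + δ) * |Real.exp x - (1 + x + x ^ 2 / 2)|
        + δ * |Real.exp (-y) - (1 + (-y) + (-y) ^ 2 / 2)| := by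
    rw [abs_div, abs_of_pos h2δ]
    refine le_trans (div_le_self (abs_nonneg _) (by linarith)) ?_
    refine le_trans (abs_add_le _ _) ?_
    rw [abs_mul, abs_mul, abs_of_pos hδ1, abs_of_pos hδ]
  refine le_trans habs ?_
  have b1 : (1 + δ) * |Real.exp x - (1 + x + x ^ 2 / 2)| ≤ (1 + δ) * (x ^ 3 * (2 / 9)) :=
    mul_le_mul_of_nonneg_left hR1 (by linarith)
  have b2 : δ * |Real.exp (-y) - (1 + (-y) + (-y) ^ 2 / 2)| ≤ δ * (y ^ 3 * (2 / 9)) :=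
    mul_le_mul_of_nonneg_left hR2 (by linarith)
  have hx3 : x ^ 3 = lam ^ 3 * δ ^ 3 * t ^ 3 := by rw [hxd]; ring
  have hy3 : y ^ 3 = lam ^ 3 * (1 + δ) ^ 3 * t ^ 3 := by rw [hyd]; ring
  have hδ2 : δ ^ 2 ≤ δ₀ ^ 2 := by nlinarith
  have hδ12 : (1 + δ) ^ 2 ≤ (1 + δ₀) ^ 2 := by nlinarith
  have ht3 : 0 ≤ t ^ 3 := by positivity
  have hl3 : 0 < lam ^ 3 := by positivity
  calc (1 + δ) * |Real.exp x - (1 + x + x ^ 2 / 2)|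
        + δ * |Real.exp (-y) - (1 + (-y) + (-y) ^ 2 / 2)|
      ≤ (1 + δ) * (x ^ 3 * (2 / 9)) + δ * (y ^ 3 * (2 / 9)) := by linarith
    _ ≤ lam ^ 3 * (δ₀ ^ 2 + (1 + δ₀) ^ 2) * δ * (1 + δ) * t ^ 3 := by
        rw [hx3, hy3]
        have hK : 0 ≤ lam ^ 3 * t ^ 3 * (δ * (1 + δ)) := by positivity
        have hS : 0 ≤ δ ^ 2 + (1 + δ) ^ 2 := by positivity
        have h1 : (lam ^ 3 * t ^ 3 * (δ * (1 + δ))) * (δ ^ 2 + (1 + δ) ^ 2)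
            ≤ (lam ^ 3 * t ^ 3 * (δ * (1 + δ))) * (δ₀ ^ 2 + (1 + δ₀) ^ 2) :=
          mul_le_mul_of_nonneg_left (add_le_add hδ2 hδ12) hK
        have h2 : 0 ≤ (lam ^ 3 * t ^ 3 * (δ * (1 + δ))) * (δ ^ 2 + (1 + δ) ^ 2) :=
          mul_nonneg hK hS
        have e : (1 + δ) * (lam ^ 3 * δ ^ 3 * t ^ 3 * (2 / 9)) + δ * (lam ^ 3 * (1 + δ) ^ 3 * t ^ 3 * (2 / 9))
            = 2 / 9 * ((lam ^ 3 * t ^ 3 * (δ * (1 + δ))) * (δ ^ 2 + (1 + δ) ^ 2)) := by ring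
        have e2 : lam ^ 3 * (δ₀ ^ 2 + (1 + δ₀) ^ 2) * δ * (1 + δ) * t ^ 3
            = (lam ^ 3 * t ^ 3 * (δ * (1 + δ))) * (δ₀ ^ 2 + (1 + δ₀) ^ 2) := by ring
        rw [e, e2]
        linarith

/-- For the centered Laplace density `f(z) = (λ/2)exp(−λ|z|)` and any `δ₀ > 0`,
there are `C > 0` and `θ₀ > 0` such that for all `|θ| ≤ θ₀` and all `δ ∈ (0, δ₀]`,
`| ∫ ((f(z+θ)/f(z))^{1+δ} − 1) f(z) dz − (1/2)δ(1+δ)θ²λ² | ≤ C·δ(1+δ)|θ|³`. -/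
theorem laplace_E2_expansion (lam : ℝ) (hlam : 0 < lam)
    (f : ℝ → ℝ) (hf : ∀ z : ℝ, f z = (lam / 2) * Real.exp (-(lam * |z|)))
    (δ₀ : ℝ) (hδ₀ : 0 < δ₀) :
    ∃ C > (0 : ℝ), ∃ θ₀ > (0 : ℝ), ∀ θ : ℝ, |θ| ≤ θ₀ →
      ∀ δ : ℝ, 0 < δ → δ ≤ δ₀ →
        |(∫ z : ℝ, ((f (z + θ) / f z) ^ (1 + δ : ℝ) - 1) * f z)
            - (1 / 2) * δ * (1 + δ) * θ ^ 2 * lam ^ 2|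
          ≤ C * δ * (1 + δ) * |θ| ^ 3 := by
  obtain ⟨C, hC, θ₀, hθ₀p, H⟩ := remainder_bound lam δ₀ hlam hδ₀
  refine ⟨C, hC, θ₀, hθ₀p, fun θ hθ δ hδ hδδ => ?_⟩
  have hfz : ∀ θ' z : ℝ, ((f (z + θ') / f z) ^ (1 + δ : ℝ) - 1) * f z
      = (Real.exp (-(lam * (1 + δ) * (|z + θ'| - |z|))) - 1)
        * (lam / 2 * Real.exp (-(lam * |z|))) := by
    intro θ' z
    rw [hf (z + θ'), hf z,
      mul_div_mul_left _ _ (by positivity : (0:ℝ) < lam / 2).ne',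
      ← Real.exp_sub, ← Real.exp_mul,
      show (-(lam * |z + θ'|) - -(lam * |z|)) * (1 + δ)
        = -(lam * (1 + δ) * (|z + θ'| - |z|)) by ring]
  have hint : (∫ z : ℝ, ((f (z + θ) / f z) ^ (1 + δ : ℝ) - 1) * f z)
      = ((1 + δ) * Real.exp (lam * δ * |θ|)
          + δ * Real.exp (-(lam * (1 + δ) * |θ|))) / (1 + 2 * δ) - 1 := by
    simp_rw [hfz θ]
    rcases le_or_gt 0 θ with h | h
    · rw [abs_of_nonneg h]
      exact laplace_int_nonneg lam δ θ hlam hδ h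
    · rw [abs_of_neg h]
      have h1 : ∀ z : ℝ,
          (Real.exp (-(lam * (1 + δ) * (|z + θ| - |z|))) - 1)
            * (lam / 2 * Real.exp (-(lam * |z|)))
          = (fun w : ℝ => (Real.exp (-(lam * (1 + δ) * (|w + -θ| - |w|))) - 1)
              * (lam / 2 * Real.exp (-(lam * |w|)))) (-z) := by
        intro z
        simp only
        rw [show -z + -θ = -(z + θ) by ring, abs_neg, abs_neg]
      calc ∫ z : ℝ, (Real.exp (-(lam * (1 + δ) * (|z + θ| - |z|))) - 1)
              * (lam / 2 * Real.exp (-(lam * |z|)))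
          = ∫ z : ℝ, (fun w : ℝ => (Real.exp (-(lam * (1 + δ) * (|w + -θ| - |w|))) - 1)
              * (lam / 2 * Real.exp (-(lam * |w|)))) (-z) := by simp_rw [h1]
        _ = ∫ z : ℝ, (Real.exp (-(lam * (1 + δ) * (|z + -θ| - |z|))) - 1)
              * (lam / 2 * Real.exp (-(lam * |z|))) := by
              exact myIntegral_comp_neg
                (fun w : ℝ => (Real.exp (-(lam * (1 + δ) * (|w + -θ| - |w|))) - 1)
                  * (lam / 2 * Real.exp (-(lam * |w|))))
        _ = _ := laplace_int_nonneg lam δ (-θ) hlam hδ (by linarith)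
  rw [hint]
  have hH := H |θ| (abs_nonneg θ) hθ δ hδ hδδ
  rw [sq_abs] at hH
  convert hH using 3 <;> ring
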